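/- Let n ≥ 1, let f : {0,1}^n → {0,1}, and let ψ_f ∈ ℂ^({0,1}^n × {0,1}) be the uniform quantum example of f, i.e. (ψ_f)_{(x,b)} = 2^{-n/2} if b = f(x) and 0 otherwise. Then for every subset T ⊆ {0,1}^n, Σ_{S ∈ T} |(H_{n+1} ψ_f)_{(S,1)}|² = (1/2) · Σ_{S ∈ T} f̂(S)², where f̂ denotes the Fourier transform of (−1)^f. Equivalently, the observable M' = H_{n+1} · Π · M̃ · Π · H_{n+1}, with M̃ = Σ_{S ∈ T} |S⟩⟨S| ⊗ I₂ and Π = I_{2^n} ⊗ |1⟩⟨1|, satisfies ⟨ψ_f, M' ψ_f⟩ = (1/2) · Σ_{S ∈ T} f̂(S)², so a single quantum statistical query estimates the Fourier mass of f on T. -/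

import Mathlib

open Finset Matrix

/-- The character `χ_S(x) = (-1)^{S·x}` on the Boolean cube `{0,1}^n`. -/
noncomputable def chi {n : ℕ} (S x : Fin n → ZMod 2) : ℝ :=
  (-1 : ℝ) ^ (∑ i, S i * x i).val

/-- The Fourier coefficient of `(-1)^f` at `S`. -/
noncomputable def fourierHat {n : ℕ} (f : (Fin n → ZMod 2) → ZMod 2)
    (S : Fin n → ZMod 2) : ℝ :=
  (2 ^ n : ℝ)⁻¹ * ∑ x : Fin n → ZMod 2, (-1 : ℝ) ^ (f x).val * chi S x

/-- The uniform quantum example `|ψ_f⟩` of a Boolean function `f`. -/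
noncomputable def quantumExample {n : ℕ} (f : (Fin n → ZMod 2) → ZMod 2) :
    (Fin n → ZMod 2) × ZMod 2 → ℂ :=
  fun p => if p.2 = f p.1 then (((Real.sqrt (2 ^ n))⁻¹ : ℝ) : ℂ) else 0

/-- The `(n+1)`-qubit Hadamard transform. -/
noncomputable def hadamard (n : ℕ) :
    Matrix ((Fin n → ZMod 2) × ZMod 2) ((Fin n → ZMod 2) × ZMod 2) ℂ :=
  fun p q =>
    (((Real.sqrt (2 ^ (n + 1)))⁻¹ : ℝ) : ℂ) *
      (-1 : ℂ) ^ ((∑ i, p.1 i * q.1 i) + p.2 * q.2).val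

/-- The projector `Σ_{S ∈ T} |S⟩⟨S| ⊗ I₂` onto Fourier characters in `T`. -/
noncomputable def projT {n : ℕ} (T : Finset (Fin n → ZMod 2)) :
    Matrix ((Fin n → ZMod 2) × ZMod 2) ((Fin n → ZMod 2) × ZMod 2) ℂ :=
  fun p q => if p.1 = q.1 ∧ p.1 ∈ T ∧ p.2 = q.2 then 1 else 0

/-- The projector `I_{2^n} ⊗ |1⟩⟨1|` onto the last qubit being `1`. -/
noncomputable def projLast (n : ℕ) :
    Matrix ((Fin n → ZMod 2) × ZMod 2) ((Fin n → ZMod 2) × ZMod 2) ℂ :=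
  fun p q => if p = q ∧ p.2 = 1 then 1 else 0

/- ### Auxiliary lemmas -/

lemma pow_val_add' (a b : ZMod 2) :
    (-1 : ℂ) ^ (a + b).val = (-1) ^ a.val * (-1) ^ b.val := by
  fin_cases a <;> fin_cases b <;> simp [ZMod.val] <;> simp +decide

lemma key_entry {n : ℕ} (f : (Fin n → ZMod 2) → ZMod 2) (S : Fin n → ZMod 2) :
    (hadamard n).mulVec (quantumExample f) (S, 1) =
      ((fourierHat f S * (Real.sqrt 2)⁻¹ : ℝ) : ℂ) := by
  have hs : Real.sqrt (2 ^ (n+1)) = Real.sqrt 2 * Real.sqrt (2^n) := by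
    rw [pow_succ, mul_comm, Real.sqrt_mul (by positivity)]
  have hsq : Real.sqrt (2^n) * Real.sqrt (2^n) = 2^n := by
    rw [← Real.sqrt_mul (by positivity)]
    rw [show (2:ℝ)^n * 2^n = ((2:ℝ)^n)^2 by ring]
    exact Real.sqrt_sq (by positivity)
  simp only [Matrix.mulVec, dotProduct, _root_.hadamard, quantumExample, fourierHat, chi]
  rw [Fintype.sum_prod_type]
  push_cast
  simp only [mul_ite, mul_zero, Finset.sum_ite_eq' Finset.univ, Finset.mem_univ, if_true]
  rw [Finset.mul_sum, Finset.sum_mul]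
  apply Finset.sum_congr rfl
  intro x _
  simp only [one_mul, pow_val_add']
  push_cast
  rw [hs]
  have h2 : Real.sqrt 2 ≠ 0 := by positivity
  have h2n : Real.sqrt (2^n) ≠ 0 := by positivity
  have hsqC : ((Real.sqrt (2^n) : ℝ) : ℂ) * ((Real.sqrt (2^n) : ℝ) : ℂ) = (2:ℂ)^n := by
    exact_mod_cast hsq
  field_simp
  push_cast
  linear_combination -((Real.sqrt 2 : ℝ):ℂ) * hsqC

lemma projLast_mulVec {n : ℕ} (w : (Fin n → ZMod 2) × ZMod 2 → ℂ)
    (p : (Fin n → ZMod 2) × ZMod 2) :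
    (projLast n).mulVec w p = if p.2 = 1 then w p else 0 := by
  by_cases h : p.2 = 1 <;>
    simp [Matrix.mulVec, dotProduct, projLast, h, ite_and, Finset.sum_ite_eq]

lemma projT_mulVec {n : ℕ} (T : Finset (Fin n → ZMod 2))
    (w : (Fin n → ZMod 2) × ZMod 2 → ℂ) (p : (Fin n → ZMod 2) × ZMod 2) :
    (projT T).mulVec w p = if p.1 ∈ T then w p else 0 := by
  by_cases h : p.1 ∈ T <;>
    simp [Matrix.mulVec, dotProduct, projT, h, ite_and, ← Prod.ext_iff,
      Finset.sum_ite_eq]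

lemma had_symm {n : ℕ} (p q : (Fin n → ZMod 2) × ZMod 2) :
    hadamard n p q = hadamard n q p := by
  have h1 : (∑ i, p.1 i * q.1 i) = ∑ i, q.1 i * p.1 i :=
    Finset.sum_congr rfl fun i _ => mul_comm _ _
  simp only [_root_.hadamard, h1, mul_comm p.2 q.2]

lemma had_star {n : ℕ} (p q : (Fin n → ZMod 2) × ZMod 2) :
    star (hadamard n p q) = hadamard n p q := by
  simp [_root_.hadamard, star_mul']

lemma dot_swap {n : ℕ} (ψ u : (Fin n → ZMod 2) × ZMod 2 → ℂ) :
    star ψ ⬝ᵥ (hadamard n).mulVec u =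
      ∑ q, star ((hadamard n).mulVec ψ q) * u q := by
  simp only [dotProduct, Matrix.mulVec, Pi.star_apply, star_sum, star_mul',
    Finset.sum_mul, Finset.mul_sum]
  rw [Finset.sum_comm]
  refine Finset.sum_congr rfl fun q _ => Finset.sum_congr rfl fun p _ => ?_
  rw [had_star, had_symm]
  ring

lemma abs_sq_entry {n : ℕ} (f : (Fin n → ZMod 2) → ZMod 2) (S : Fin n → ZMod 2) :
    ‖(hadamard n).mulVec (quantumExample f) (S, 1)‖ ^ 2 =
      fourierHat f S ^ 2 * (1/2) := by
  rw [key_entry, Complex.norm_real, Real.norm_eq_abs, sq_abs, mul_pow, inv_pow,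
    Real.sq_sqrt (by norm_num : (2:ℝ) ≥ 0)]
  ring

/-- A single quantum statistical query estimates the Fourier mass of `f` on a
set `T ⊆ {0,1}^n`: the squared magnitudes of the `(S,1)`-entries of
`H_{n+1}|ψ_f⟩` over `S ∈ T` sum to `(1/2)·Σ_{S ∈ T} f̂(S)²`, and equivalently
the observable `M' = H_{n+1}·Π·M̃·Π·H_{n+1}` with `M̃ = Σ_{S∈T}|S⟩⟨S| ⊗ I₂`
and `Π = I ⊗ |1⟩⟨1|` has expectation `⟨ψ_f|M'|ψ_f⟩ = (1/2)·Σ_{S ∈ T} f̂(S)²`. -/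
theorem stmt1 {n : ℕ} (hn : 1 ≤ n) (f : (Fin n → ZMod 2) → ZMod 2)
    (T : Finset (Fin n → ZMod 2)) :
    (∑ S ∈ T,
        ‖(hadamard n).mulVec (quantumExample f) (S, 1)‖ ^ 2) =
      (1 / 2) * ∑ S ∈ T, fourierHat f S ^ 2 ∧
    (star (quantumExample f) ⬝ᵥ
        ((hadamard n * projLast n * projT T * projLast n *
          hadamard n).mulVec (quantumExample f))) =
      (((1 / 2) * ∑ S ∈ T, fourierHat f S ^ 2 : ℝ) : ℂ) := by
  constructor
  · rw [Finset.mul_sum]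
    exact Finset.sum_congr rfl fun S _ => by rw [abs_sq_entry]; ring
  · set v := (hadamard n).mulVec (quantumExample f) with hv
    have assoc : (hadamard n * projLast n * projT T * projLast n *
          hadamard n).mulVec (quantumExample f) =
        (hadamard n).mulVec ((projLast n).mulVec ((projT T).mulVec
          ((projLast n).mulVec v))) := by
      simp only [← Matrix.mulVec_mulVec, hv]
    rw [assoc]
    have hu : ((projLast n).mulVec ((projT T).mulVec ((projLast n).mulVec v))) =
        fun q => if q.1 ∈ T ∧ q.2 = 1 then v q else 0 := by
      funext q
      rw [projLast_mulVec, projT_mulVec, projLast_mulVec]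
      by_cases h1 : q.2 = 1 <;> by_cases h2 : q.1 ∈ T <;> simp [h1, h2]
    rw [hu, dot_swap]
    have hsum : ∀ x : Fin n → ZMod 2,
        (∑ b : ZMod 2, star (v (x, b)) *
          (if x ∈ T ∧ b = 1 then v (x, b) else 0)) =
        if x ∈ T then star (v (x,1)) * v (x,1) else 0 := by
      intro x
      by_cases h : x ∈ T <;>
        simp [h, mul_ite, mul_zero, Finset.sum_ite_eq' Finset.univ]
    rw [Fintype.sum_prod_type]
    rw [← hv]
    simp only [hsum]
    rw [Finset.sum_ite_mem, Finset.univ_inter]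
    have hterm : ∀ S : Fin n → ZMod 2,
        star (v (S,1)) * v (S,1) = ((fourierHat f S ^ 2 * (1/2) : ℝ) : ℂ) := by
      intro S
      rw [hv, key_entry, RCLike.star_def, Complex.conj_ofReal, ← Complex.ofReal_mul]
      congr 1
      have h2 : ((Real.sqrt 2)⁻¹ * (Real.sqrt 2)⁻¹ : ℝ) = 1/2 := by
        rw [← mul_inv, Real.mul_self_sqrt (by norm_num : (0:ℝ) ≤ 2)]
        norm_num
      linear_combination (fourierHat f S)^2 * h2
    simp only [hterm]
    push_cast
    rw [Finset.mul_sum]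
    exact Finset.sum_congr rfl fun S _ => by ring
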